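/- Let h be a differentiable strictly monotone activation and consider y_i = h(⟨A_i, z⟩ + b_i) for all i. If for every i, ∂L/∂y_i ≠ 0 and h'(⟨A_i,z⟩+b_i) ≠ 0, then the pair of gradients (∂L/∂A, ∂L/∂b) determines z uniquely, i.e., the map z ↦ (∂L/∂A, ∂L/∂b) (for fixed A, b, and upstream loss values) is injective on the set of z consistent with the given ∂L/∂y. -/
import Mathlib


theorem stmt13 {Ny Nz : ℕ} (hNy : 1 ≤ Ny)
    (h' : ℝ → ℝ)  -- derivative of the activation
    (A : Fin Ny → Fin Nz → ℝ) (b : Fin Ny → ℝ)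
    (gy : Fin Ny → ℝ)  -- fixed upstream gradient ∂L/∂y
    (hgy : ∀ i, gy i ≠ 0)
    (gradMap : (Fin Nz → ℝ) → (Fin Ny → Fin Nz → ℝ) × (Fin Ny → ℝ))
    (hgrad : ∀ z : Fin Nz → ℝ, gradMap z =
      (fun i m => gy i * h' ((∑ m', A i m' * z m') + b i) * z m,
       fun i => gy i * h' ((∑ m', A i m' * z m') + b i))) :
    Set.InjOn gradMap {z | ∀ i, h' ((∑ m', A i m' * z m') + b i) ≠ 0} := by
  intro z1 hz1 z2 hz2 heq
  have i : Fin Ny := ⟨0, hNy⟩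
  rw [hgrad z1, hgrad z2] at heq
  have hb := congrFun (congrArg Prod.snd heq) i
  have hA := congrFun (congrFun (congrArg Prod.fst heq) i)
  simp only at hb hA
  have hc : gy i * h' ((∑ m', A i m' * z1 m') + b i) ≠ 0 :=
    mul_ne_zero (hgy i) (hz1 i)
  funext m
  have := hA m
  rw [hb] at this
  exact mul_left_cancel₀ (hb ▸ hc) this
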